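/- Let κ ∈ ℂ with -Im κ ≥ (α/(2√(α+1)))|Re κ| and α > 0. Then for every z, w ∈ ℂᴺ and u ∈ ℂ with u ≠ 0, Re[iκ(((α+2)/2)|u|^α |w|² + (α/2)|u|^{α-2}u² w̄·w̄)] ≥ (-(α+2)/2·Im κ - (α/2)|κ|)·|u|^α|w|² ≥ 0. -/

import Mathlib

open scoped ComplexConjugate

/-- Key pointwise inequality: if `-Im κ ≥ (α/(2√(α+1)))|Re κ|`, then for `u ≠ 0` and
`w ∈ ℂᴺ`, `Re[iκ(((α+2)/2)|u|^α|w|² + (α/2)|u|^{α-2}u² w̄·w̄)]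
  ≥ (-(α+2)/2·Im κ - (α/2)|κ|)|u|^α|w|² ≥ 0`. -/
theorem pointwise_monotonicity_inequality (N : ℕ) (α : ℝ) (hα : 0 < α) (κ : ℂ)
    (hκ : -κ.im ≥ α / (2 * Real.sqrt (α + 1)) * |κ.re|) (u : ℂ) (hu : u ≠ 0)
    (w : Fin N → ℂ) :
    (Complex.I * κ *
        ((((α + 2) / 2 : ℝ) : ℂ) * ((‖u‖ ^ α : ℝ) : ℂ) *
            ((∑ j, ‖w j‖ ^ 2 : ℝ) : ℂ) +
          ((α / 2 : ℝ) : ℂ) * ((‖u‖ ^ (α - 2) : ℝ) : ℂ) * u ^ 2 *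
            ∑ j, (conj (w j)) ^ 2)).re ≥
      (-((α + 2) / 2) * κ.im - α / 2 * ‖κ‖) * ‖u‖ ^ α *
        (∑ j, ‖w j‖ ^ 2) ∧
    (-((α + 2) / 2) * κ.im - α / 2 * ‖κ‖) * ‖u‖ ^ α *
        (∑ j, ‖w j‖ ^ 2) ≥ 0 := by
  have ha0 : 0 < ‖u‖ := norm_pos_iff.mpr hu
  set a : ℝ := ‖u‖ with ha
  set S : ℝ := ∑ j, ‖w j‖ ^ 2 with hS
  have hS0 : 0 ≤ S := Finset.sum_nonneg fun j _ => sq_nonneg _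
  have hrp : 0 ≤ a ^ α := Real.rpow_nonneg ha0.le α
  -- Step 1: α|κ| ≤ (α+2)(-Im κ)
  have hs : Real.sqrt (α + 1) ^ 2 = α + 1 := Real.sq_sqrt (by linarith)
  have hs0 : 0 < Real.sqrt (α + 1) := Real.sqrt_pos.2 (by linarith)
  have him : 0 ≤ -κ.im := le_trans (by positivity) hκ
  have h1 : α * |κ.re| ≤ 2 * Real.sqrt (α + 1) * (-κ.im) := by
    rw [ge_iff_le, div_mul_eq_mul_div, div_le_iff₀ (by positivity)] at hκ
    linarith
  have hsq : α ^ 2 * κ.re ^ 2 ≤ 4 * (α + 1) * κ.im ^ 2 := by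
    nlinarith [h1, him, hs, abs_nonneg κ.re, sq_abs κ.re, mul_nonneg hα.le (abs_nonneg κ.re)]
  have habs : ‖κ‖ ^ 2 = κ.re ^ 2 + κ.im ^ 2 := by
    rw [Complex.sq_norm, Complex.normSq_apply]; ring
  have hkey : α * ‖κ‖ ≤ (α + 2) * (-κ.im) := by
    have h2 : (α * ‖κ‖) ^ 2 ≤ ((α + 2) * (-κ.im)) ^ 2 := by nlinarith
    nlinarith [norm_nonneg κ, mul_nonneg hα.le (norm_nonneg κ),
      mul_nonneg (by linarith : (0:ℝ) ≤ α + 2) him]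
  have hC0 : 0 ≤ -((α + 2) / 2) * κ.im - α / 2 * ‖κ‖ := by linarith
  refine ⟨?_, mul_nonneg (mul_nonneg hC0 hrp) hS0⟩
  -- split the real part
  set B : ℂ := ((α / 2 : ℝ) : ℂ) * ((a ^ (α - 2) : ℝ) : ℂ) * u ^ 2 * ∑ j, (conj (w j)) ^ 2
    with hB
  have hsplit : Complex.I * κ *
      ((((α + 2) / 2 : ℝ) : ℂ) * ((a ^ α : ℝ) : ℂ) * ((S : ℝ) : ℂ) + B)
      = Complex.I * κ * (((((α + 2) / 2) * a ^ α * S : ℝ)) : ℂ) + Complex.I * κ * B := by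
    push_cast; ring
  rw [hsplit, Complex.add_re]
  have hre1 : (Complex.I * κ * (((((α + 2) / 2) * a ^ α * S : ℝ)) : ℂ)).re
      = -κ.im * (((α + 2) / 2) * a ^ α * S) := by
    simp [Complex.mul_re, Complex.mul_im]
  have hBsum : ‖∑ j, (conj (w j)) ^ 2‖ ≤ S := by
    calc ‖∑ j, (conj (w j)) ^ 2‖
        ≤ ∑ j, ‖(conj (w j)) ^ 2‖ := norm_sum_le _ _
      _ = S := by simp [hS, norm_pow]
  have hpow : a ^ (α - 2) * a ^ 2 = a ^ α := by
    rw [← Real.rpow_natCast a 2, ← Real.rpow_add ha0]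
    norm_num
  have habsB : ‖Complex.I * κ * B‖ ≤ ‖κ‖ * (α / 2 * a ^ α * S) := by
    rw [hB, norm_mul, norm_mul, norm_mul, norm_mul, norm_mul, Complex.norm_I, one_mul, norm_pow]
    rw [Complex.norm_real, Real.norm_eq_abs, Complex.norm_real, Real.norm_eq_abs, ← ha]
    rw [abs_of_nonneg (by positivity : (0:ℝ) ≤ α / 2),
      abs_of_nonneg (Real.rpow_nonneg ha0.le _)]
    calc ‖κ‖ * (α / 2 * a ^ (α - 2) * a ^ 2 * ‖∑ j, (conj (w j)) ^ 2‖)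
        ≤ ‖κ‖ * (α / 2 * a ^ (α - 2) * a ^ 2 * S) := by
          gcongr
      _ = ‖κ‖ * (α / 2 * a ^ α * S) := by rw [mul_assoc (α/2), hpow]
  have hre2 : (Complex.I * κ * B).re ≥ -(‖κ‖ * (α / 2 * a ^ α * S)) := by
    have h := Complex.abs_re_le_norm (Complex.I * κ * B)
    have h2 := neg_abs_le ((Complex.I * κ * B).re)
    linarith [abs_le.1 (le_refl |(Complex.I * κ * B).re|)]
  rw [hre1]
  nlinarith [mul_nonneg hrp hS0, hre2]
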